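/- Let Δ₁ and Δ₂ be two d-simplices with vertices in a finite point configuration 𝒜 ⊂ ℤ^d that share a common facet and intersect only in that facet. Then the intersection of the cones 𝒞_{Δ₁} and 𝒞_{Δ₂} is nonempty, where 𝒞_Δ = {h ∈ ℝ^n : φ_{Δ,h}(a_j) < h_j for all a_j ∈ 𝒜 ∖ Δ} and φ_{Δ,h} is the unique affine function agreeing with h on the d+1 points of Δ. -/

import Mathlib

/-- `h` lies in the cone `𝒞_Δ`: there is an affine function (given by a linear part `w`
and a constant `c`) agreeing with `h` on the points of `Δ` and lying strictly below `h`
at all points of the configuration not in `Δ`. -/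
def InCone {n d : ℕ} (p : Fin n → Fin d → ℝ) (Δ : Finset (Fin n)) (h : Fin n → ℝ) : Prop :=
  ∃ (w : Fin d → ℝ) (c : ℝ),
    (∀ j ∈ Δ, (∑ i, w i * p j i) + c = h j) ∧
    (∀ j ∉ Δ, (∑ i, w i * p j i) + c < h j)

/-- Every affine function on `Fin d → ℝ` has the form `x ↦ ∑ i, w i * x i + c`. -/
lemma exists_wc_rep {d : ℕ} (f : (Fin d → ℝ) →ᵃ[ℝ] ℝ) :
    ∃ (w : Fin d → ℝ) (c : ℝ), ∀ x, (∑ i, w i * x i) + c = f x := by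
  refine ⟨fun i => f.linear (fun j => if i = j then 1 else 0), f 0, fun x => ?_⟩
  have h1 : f x = f.linear x + f 0 := by
    conv_lhs => rw [show x = x +ᵥ (0 : Fin d → ℝ) by simp]
    rw [f.map_vadd]; rfl
  rw [h1, LinearMap.pi_apply_eq_sum_univ f.linear x]
  simp [mul_comm]

set_option maxHeartbeats 2000000 in
theorem cone_intersection_nonempty {n d : ℕ} (a : Fin n → Fin d → ℤ)
    (P : Fin n → Fin d → ℝ) (hP : ∀ j i, P j i = (a j i : ℝ))
    (hinj : Function.Injective P)
    (hfull : affineSpan ℝ (Set.range P) = ⊤)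
    (Δ₁ Δ₂ : Finset (Fin n))
    (hc₁ : Δ₁.card = d + 1) (hc₂ : Δ₂.card = d + 1)
    (haff₁ : AffineIndependent ℝ (fun j : Δ₁ => P j))
    (haff₂ : AffineIndependent ℝ (fun j : Δ₂ => P j))
    (hfacet : (Δ₁ ∩ Δ₂).card = d)
    (hmeet : convexHull ℝ (P '' ↑Δ₁) ∩ convexHull ℝ (P '' ↑Δ₂)
        = convexHull ℝ (P '' ↑(Δ₁ ∩ Δ₂))) :
    ∃ h : Fin n → ℝ, InCone P Δ₁ h ∧ InCone P Δ₂ h := by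
  classical
  set F : Finset (Fin n) := Δ₁ ∩ Δ₂ with hF
  have hFΔ₁ : F ⊆ Δ₁ := Finset.inter_subset_left
  have hFΔ₂ : F ⊆ Δ₂ := Finset.inter_subset_right
  -- extract the opposite vertices
  have hss₁ : F ⊂ Δ₁ := Finset.ssubset_of_subset_of_ssubset (le_refl F)
    (Finset.ssubset_iff_subset_ne.2 ⟨hFΔ₁, fun h => by
      rw [h, hc₁] at hfacet; omega⟩)
  have hss₂ : F ⊂ Δ₂ := Finset.ssubset_iff_subset_ne.2 ⟨hFΔ₂, fun h => by
      rw [h, hc₂] at hfacet; omega⟩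
  obtain ⟨v₁, hv₁, hv₁F⟩ := Finset.exists_of_ssubset hss₁
  obtain ⟨v₂, hv₂, hv₂F⟩ := Finset.exists_of_ssubset hss₂
  have hΔ₁ : Δ₁ = insert v₁ F := by
    refine (Finset.eq_of_subset_of_card_le
      (Finset.insert_subset hv₁ hFΔ₁) ?_).symm
    rw [hc₁, Finset.card_insert_of_notMem hv₁F, hfacet]
  have hΔ₂ : Δ₂ = insert v₂ F := by
    refine (Finset.eq_of_subset_of_card_le
      (Finset.insert_subset hv₂ hFΔ₂) ?_).symm
    rw [hc₂, Finset.card_insert_of_notMem hv₂F, hfacet]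
  -- dimension is positive
  rcases Nat.eq_zero_or_pos d with hd | hd0
  · exfalso
    have : P v₁ = P v₂ := by
      funext i; exact absurd i.2 (by omega)
    have hv : v₁ = v₂ := hinj this
    have : v₁ ∈ F := Finset.mem_inter.2 ⟨hv₁, hv ▸ hv₂⟩
    have : F.Nonempty := ⟨v₁, this⟩
    rw [← Finset.card_pos, hfacet] at this; omega
  have hdR : (0:ℝ) < d := by exact_mod_cast hd0
  -- affine basis from Δ₁
  have htot : affineSpan ℝ (Set.range (fun j : Δ₁ => P j)) = ⊤ := by
    rw [haff₁.affineSpan_eq_top_iff_card_eq_finrank_add_one]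
    rw [Fintype.card_coe, hc₁, Module.finrank_fin_fun]
  let b : AffineBasis Δ₁ ℝ (Fin d → ℝ) := ⟨fun j : Δ₁ => P j, haff₁, htot⟩
  have hbcoe : ∀ j : Δ₁, b j = P j := fun j => rfl
  let vb₁ : Δ₁ := ⟨v₁, hv₁⟩
  -- the coordinate function of v₁ and the barycentric coordinates of P v₂
  obtain ⟨ℓ, hℓ⟩ : ∃ ℓ : (Fin d → ℝ) →ᵃ[ℝ] ℝ, ℓ = b.coord vb₁ := ⟨_, rfl⟩
  obtain ⟨c, hc⟩ : ∃ c : Δ₁ → ℝ, c = fun j => b.coord j (P v₂) := ⟨_, rfl⟩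
  have hsum_c : ∑ j, c j = 1 := by
    rw [hc]; exact b.sum_coord_apply_eq_one (P v₂)
  have hcomb : ∑ j, c j • P (j : Fin n) = P v₂ := by
    simp only [hc]
    exact b.linear_combination_coord_eq_self (P v₂)
  obtain ⟨t, htdef⟩ : ∃ t : ℝ, t = c vb₁ := ⟨_, rfl⟩
  have htℓ : t = ℓ (P v₂) := by rw [htdef, hc, hℓ]
  have hℓF : ∀ j (hj : j ∈ F), ℓ (P j) = 0 := by
    intro j hj
    have hne : (⟨j, hFΔ₁ hj⟩ : Δ₁) ≠ vb₁ := by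
      intro h
      apply hv₁F
      have : j = v₁ := congrArg Subtype.val h
      exact this ▸ hj
    have := b.coord_apply_ne (i := vb₁) (j := ⟨j, hFΔ₁ hj⟩) (Ne.symm hne)
    rw [hℓ]
    simpa [hbcoe] using this
  have hℓv₁ : ℓ (P v₁) = 1 := by
    have := b.coord_apply_eq vb₁
    rw [hℓ]
    simpa [hbcoe] using this
  -- the key geometric fact: t < 0
  have ht : t < 0 := by
    by_contra ht'
    push_neg at ht'
    -- set up the perturbed point
    obtain ⟨M, hM⟩ : ∃ M : ℝ, M = 1 + ∑ j, |c j| := ⟨_, rfl⟩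
    have hM1 : (1:ℝ) ≤ M := by
      have h0 : (0:ℝ) ≤ ∑ j, |c j| := Finset.sum_nonneg fun j _ => abs_nonneg _
      rw [hM]; linarith
    have hMc : ∀ j, -M ≤ c j := by
      intro j
      have h1 : |c j| ≤ ∑ j', |c j'| :=
        Finset.single_le_sum (f := fun j => |c j|) (fun j _ => abs_nonneg _)
          (Finset.mem_univ j)
      have h2 := neg_abs_le (c j)
      rw [hM]; linarith
    obtain ⟨ε, hε⟩ : ∃ ε : ℝ, ε = 1 / (1 + d * M) := ⟨_, rfl⟩
    have hden : (0:ℝ) < 1 + d * M := by nlinarith [hdR, hM1]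
    have hε0 : 0 < ε := by rw [hε]; exact one_div_pos.2 hden
    have hε1 : ε ≤ 1 := by
      rw [hε, div_le_one hden]
      nlinarith
    have hkey : ∀ j : Δ₁, (j : Fin n) ∈ F → 0 ≤ (1 - ε) * (d : ℝ)⁻¹ + ε * c j := by
      intro j hj
      have h1 : ε * (1 + d * M) = 1 := by
        rw [hε]; field_simp
      have h2 : (1 - ε) * (d : ℝ)⁻¹ = ε * M := by
        have h1' : 1 - ε = ε * (d * M) := by nlinarith [h1]
        rw [h1']
        field_simp
      have h3 : ε * c j ≥ ε * (-M) := by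
        apply mul_le_mul_of_nonneg_left (hMc j) hε0.le
      linarith
    set wF : Δ₁ → ℝ := fun j => if (j : Fin n) ∈ F then (d : ℝ)⁻¹ else 0 with hwF
    have hsum_wF : ∑ j, wF j = 1 := by
      rw [hwF]
      rw [Finset.univ_eq_attach,
        Finset.sum_attach Δ₁ (fun j => if j ∈ F then (d : ℝ)⁻¹ else 0),
        Finset.sum_ite_mem, Finset.inter_eq_right.mpr hFΔ₁, Finset.sum_const, hfacet,
        nsmul_eq_mul]
      exact mul_inv_cancel₀ hdR.ne'
    set u : Δ₁ → ℝ := fun j => (1 - ε) * wF j + ε * c j with hu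
    have hsum_u : ∑ j, u j = 1 := by
      rw [hu]
      rw [Finset.sum_add_distrib, ← Finset.mul_sum, ← Finset.mul_sum, hsum_wF, hsum_c]
      ring
    have hu0 : ∀ j, 0 ≤ u j := by
      intro j
      by_cases hj : (j : Fin n) ∈ F
      · have := hkey j hj
        simpa [hu, hwF, hj] using this
      · have hjv : j = vb₁ := by
          have hins : (j : Fin n) ∈ insert v₁ F := by rw [← hΔ₁]; exact j.2
          rcases Finset.mem_insert.1 hins with h | h
          · exact Subtype.ext h
          · exact absurd h hj
        rw [hu]
        simp only [hwF, hj, if_neg, mul_zero, zero_add, ite_false]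
        rw [hjv]
        have : 0 ≤ ε * t := mul_nonneg hε0.le ht'
        simpa [htdef] using this
    set bF : Fin d → ℝ := ∑ j, wF j • P (j : Fin n) with hbF
    set pε : Fin d → ℝ := ∑ j, u j • P (j : Fin n) with hpε
    -- bF ∈ hull F
    have hbFF : bF ∈ convexHull ℝ (P '' (F : Set (Fin n))) := by
      have h1 : bF = Finset.centerMass (Finset.univ.filter fun j : Δ₁ => (j : Fin n) ∈ F)
          wF (fun j => P (j : Fin n)) := by
        rw [Finset.centerMass_eq_of_sum_1]
        · rw [hbF]
          refine (Finset.sum_subset (Finset.filter_subset _ _) ?_).symm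
          intro j _ hj
          simp only [Finset.mem_filter, Finset.mem_univ, true_and] at hj
          simp [hwF, hj]
        · rw [← hsum_wF]
          refine Finset.sum_subset (Finset.filter_subset _ _) ?_
          intro j _ hj
          simp only [Finset.mem_filter, Finset.mem_univ, true_and] at hj
          simp [hwF, hj]
      rw [h1]
      apply Finset.centerMass_mem_convexHull
      · intro j hj
        simp only [Finset.mem_filter] at hj
        simp [hwF, hj.2, inv_nonneg, hdR.le]
      · have : ∑ j ∈ (Finset.univ.filter fun j : Δ₁ => (j : Fin n) ∈ F), wF j = 1 := by
          rw [← hsum_wF]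
          refine Finset.sum_subset (Finset.filter_subset _ _) ?_
          intro j _ hj
          simp only [Finset.mem_filter, Finset.mem_univ, true_and] at hj
          simp [hwF, hj]
        rw [this]; norm_num
      · intro j hj
        simp only [Finset.mem_filter] at hj
        exact Set.mem_image_of_mem _ hj.2
    -- pε ∈ hull Δ₁
    have hpε1 : pε ∈ convexHull ℝ (P '' (Δ₁ : Set (Fin n))) := by
      have h1 : pε = Finset.centerMass Finset.univ u (fun j : Δ₁ => P (j : Fin n)) := by
        rw [Finset.centerMass_eq_of_sum_1 _ _ hsum_u, hpε]
      rw [h1]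
      apply Finset.centerMass_mem_convexHull
      · exact fun j _ => hu0 j
      · rw [hsum_u]; norm_num
      · exact fun j _ => Set.mem_image_of_mem _ j.2
    -- pε = (1-ε) • bF + ε • P v₂
    have hpεeq : pε = (1 - ε) • bF + ε • P v₂ := by
      rw [hpε, hbF, ← hcomb, Finset.smul_sum, Finset.smul_sum, ← Finset.sum_add_distrib]
      refine Finset.sum_congr rfl fun j _ => ?_
      rw [hu]
      module
    -- pε ∈ hull Δ₂
    have hpε2 : pε ∈ convexHull ℝ (P '' (Δ₂ : Set (Fin n))) := by
      rw [hpεeq]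
      have hbF2 : bF ∈ convexHull ℝ (P '' (Δ₂ : Set (Fin n))) := by
        apply convexHull_mono (Set.image_mono ?_) hbFF
        exact_mod_cast hFΔ₂
      have hv₂2 : P v₂ ∈ convexHull ℝ (P '' (Δ₂ : Set (Fin n))) :=
        subset_convexHull ℝ _ (Set.mem_image_of_mem _ hv₂)
      exact convex_convexHull ℝ _ hbF2 hv₂2 (by linarith) hε0.le (by ring)
    -- so pε ∈ affine span of F
    have hpεS : pε ∈ affineSpan ℝ (P '' (F : Set (Fin n))) := by
      apply convexHull_subset_affineSpan
      rw [← hmeet]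
      exact ⟨hpε1, hpε2⟩
    have hbFS : bF ∈ affineSpan ℝ (P '' (F : Set (Fin n))) :=
      convexHull_subset_affineSpan _ hbFF
    -- hence P v₂ ∈ affine span of F
    have hv₂S : P v₂ ∈ affineSpan ℝ (P '' (F : Set (Fin n))) := by
      have h1 := AffineSubspace.smul_vsub_vadd_mem _ ε⁻¹ hpεS hbFS hbFS
      have h2 : ε⁻¹ • (pε -ᵥ bF) +ᵥ bF = P v₂ := by
        rw [hpεeq]
        rw [vsub_eq_sub, vadd_eq_add]
        have h3 : (1 - ε) • bF + ε • P v₂ - bF = ε • (P v₂ - bF) := by module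
        rw [h3, smul_smul, inv_mul_cancel₀ hε0.ne', one_smul]
        module
      rwa [h2] at h1
    -- contradiction with affine independence of Δ₂
    have himg : P '' (F : Set (Fin n))
        = (fun j : Δ₂ => P (j : Fin n)) '' {j : Δ₂ | (j : Fin n) ∈ F} := by
      ext x
      constructor
      · rintro ⟨y, hy, rfl⟩
        exact ⟨⟨y, hFΔ₂ hy⟩, hy, rfl⟩
      · rintro ⟨j, hj, rfl⟩
        exact ⟨j, hj, rfl⟩
    rw [himg] at hv₂S
    have := (haff₂.mem_affineSpan_iff ⟨v₂, hv₂⟩ {j : Δ₂ | (j : Fin n) ∈ F}).1 hv₂S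
    exact hv₂F this
  -- Now build h
  set g : Fin n → ℝ := fun j => ℓ (P j) with hg
  have hgv₂ : g v₂ = t := by rw [hg, htℓ]
  set h : Fin n → ℝ := fun j =>
    if j ∈ Δ₁ then 0 else if j ∈ Δ₂ then -g j else |g j| + 1 with hh
  obtain ⟨w, cc, hwc⟩ := exists_wc_rep ℓ
  refine ⟨h, ⟨fun _ => 0, 0, ?_, ?_⟩, ⟨fun i => -w i, -cc, ?_, ?_⟩⟩
  · intro j hj
    simp [hh, hj]
  · intro j hj
    simp only [hh, hj, if_neg, not_false_iff, zero_mul, Finset.sum_const_zero, add_zero,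
      ite_false]
    by_cases hj2 : j ∈ Δ₂
    · have hjF : j ∉ F := fun hc' => hj (hFΔ₁ hc')
      have hjv₂ : j = v₂ := by
        rw [hΔ₂, Finset.mem_insert] at hj2
        tauto
      rw [if_pos hj2, hjv₂, hgv₂]
      linarith
    · rw [if_neg hj2]
      positivity
  · intro j hj
    have hval : (∑ i, -w i * P j i) + -cc = -g j := by
      have := hwc (P j)
      have h2 : (∑ i, -w i * P j i) = -∑ i, w i * P j i := by
        rw [← Finset.sum_neg_distrib]
        exact Finset.sum_congr rfl fun i _ => by ring
      rw [h2, hg]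
      linarith [this]
    rw [hval]
    by_cases hj1 : j ∈ Δ₁
    · have hjF : j ∈ F := Finset.mem_inter.2 ⟨hj1, hj⟩
      rw [hh]
      simp only [hj1, if_pos]
      rw [hg]
      simp [hℓF j hjF]
    · rw [hh]
      simp [hj1, hj]
  · intro j hj
    have hval : (∑ i, -w i * P j i) + -cc = -g j := by
      have := hwc (P j)
      have h2 : (∑ i, -w i * P j i) = -∑ i, w i * P j i := by
        rw [← Finset.sum_neg_distrib]
        exact Finset.sum_congr rfl fun i _ => by ring
      rw [h2, hg]
      linarith [this]
    rw [hval]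
    by_cases hj1 : j ∈ Δ₁
    · have hjF : j ∉ F := fun hc' => hj (hFΔ₂ hc')
      have hjv₁ : j = v₁ := by
        rw [hΔ₁, Finset.mem_insert] at hj1
        tauto
      rw [hh]
      simp only [hj1, if_pos]
      rw [hjv₁]
      simp only [hg]
      rw [hℓv₁]
      norm_num
    · rw [hh]
      simp only [hj1, hj, if_neg, not_false_iff, ite_false]
      have := abs_nonneg (g j)
      have := neg_abs_le (g j)
      linarith
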